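/- Let q ∈ K be invertible with q^n ≠ 1 (more precisely: assume q is not an n-th root of unity), and let u, v be invertible n×n matrices over a field K satisfying uv - qvu = 1. If v (as a linear map Kⁿ → Kⁿ) has no invariant subspaces other than 0 and Kⁿ, then u = (1-q)⁻¹v⁻¹. -/
import Mathlib


/-- Let `q ∈ K` with `q ≠ 1` and `q` not an `n`-th root of unity, and let `u, v` be
invertible `n×n` matrices over a field `K` with `uv - qvu = 1`. If `v`, as a linear map
`Kⁿ → Kⁿ`, has no invariant subspaces other than `0` and `Kⁿ`, then `u = (1-q)⁻¹v⁻¹`. -/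
theorem u_eq_of_irreducible (K : Type) [Field K] (n : ℕ) (q : K)
    (hq1 : q ≠ 1) (hqn : q ^ n ≠ 1)
    (u v : (Matrix (Fin n) (Fin n) K)ˣ)
    (huv : (u : Matrix (Fin n) (Fin n) K) * (v : Matrix (Fin n) (Fin n) K) -
      q • ((v : Matrix (Fin n) (Fin n) K) * (u : Matrix (Fin n) (Fin n) K)) = 1)
    (hirr : ∀ p : Submodule K (Fin n → K),
      p.map (Matrix.mulVecLin (v : Matrix (Fin n) (Fin n) K)) ≤ p → p = ⊥ ∨ p = ⊤) :
    (u : Matrix (Fin n) (Fin n) K) =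
      (1 - q)⁻¹ • ((v⁻¹ : (Matrix (Fin n) (Fin n) K)ˣ) : Matrix (Fin n) (Fin n) K) := by
  set U : Matrix (Fin n) (Fin n) K := (u : Matrix (Fin n) (Fin n) K) with hU
  set V : Matrix (Fin n) (Fin n) K := (v : Matrix (Fin n) (Fin n) K) with hV
  have h1q : (1 : K) - q ≠ 0 := sub_ne_zero.mpr (Ne.symm hq1)
  set c : K := (1 - q)⁻¹ with hc
  set w : Matrix (Fin n) (Fin n) K := U * V - c • (1 : Matrix (Fin n) (Fin n) K) with hw
  -- key commutation relation
  have hwv : w * V = q • (V * w) := by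
    have key : w * V - q • (V * w) =
        (U * V - q • (V * U)) * V - ((1 - q) * c) • V := by
      simp only [hw, sub_mul, mul_sub, smul_sub, smul_mul_assoc, mul_smul_comm, smul_smul,
        one_mul, mul_one, mul_assoc, sub_mul]
      module
    rw [huv, mul_inv_cancel₀ h1q, one_mul, one_smul, sub_self] at key
    exact sub_eq_zero.mp key
  -- the kernel of `w` is `v`-invariant
  have hker := hirr (LinearMap.ker w.mulVecLin)
  have hinv : (LinearMap.ker w.mulVecLin).map V.mulVecLin ≤ LinearMap.ker w.mulVecLin := by
    rintro x ⟨y, hy, rfl⟩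
    simp only [SetLike.mem_coe, LinearMap.mem_ker, Matrix.mulVecLin_apply] at hy
    simp only [LinearMap.mem_ker, Matrix.mulVecLin_apply]
    rw [Matrix.mulVec_mulVec, hwv, Matrix.smul_mulVec, ← Matrix.mulVec_mulVec, hy,
      Matrix.mulVec_zero, smul_zero]
  have hVdet : V.det ≠ 0 := by
    have : IsUnit V := ⟨v, rfl⟩
    exact (Matrix.isUnit_iff_isUnit_det V).mp this |>.ne_zero
  rcases hker hinv with hbot | htop
  · -- kernel trivial : `w` has nonzero determinant, contradiction with `q ^ n ≠ 1`
    exfalso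
    have hwdet : w.det ≠ 0 := by
      intro h
      obtain ⟨x, hx0, hx⟩ := Matrix.exists_mulVec_eq_zero_iff.mpr h
      have : x ∈ LinearMap.ker w.mulVecLin := by
        simpa [Matrix.mulVecLin_apply] using hx
      rw [hbot] at this
      exact hx0 this
    have hdet : w.det * V.det = q ^ n * (V.det * w.det) := by
      have := congrArg Matrix.det hwv
      simpa [Matrix.det_mul, Matrix.det_smul, Fintype.card_fin] using this
    apply hqn
    have h2 : q ^ n * (V.det * w.det) = 1 * (V.det * w.det) := by
      linear_combination (-1 : K) * hdet
    exact mul_right_cancel₀ (mul_ne_zero hVdet hwdet) h2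
  · -- kernel is everything : `w = 0`, so `U * V = c • 1`
    have hall : ∀ x, w.mulVec x = 0 := by
      intro x
      have hx : x ∈ LinearMap.ker w.mulVecLin := by rw [htop]; trivial
      simpa [Matrix.mulVecLin_apply] using hx
    have hw0 : w = 0 := by
      ext i j
      have h3 := congrFun (hall (Pi.single j 1)) i
      rw [Matrix.mulVec_single] at h3
      simpa using h3
    have hUV : U * V = c • (1 : Matrix (Fin n) (Fin n) K) := by
      have := sub_eq_zero.mp hw0
      simpa using this
    calc U = U * (V * ((v⁻¹ : (Matrix (Fin n) (Fin n) K)ˣ) : Matrix (Fin n) (Fin n) K)) := by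
            rw [hV, Units.mul_inv, mul_one]
      _ = (U * V) * ((v⁻¹ : (Matrix (Fin n) (Fin n) K)ˣ) : Matrix (Fin n) (Fin n) K) := by
            rw [mul_assoc]
      _ = c • ((v⁻¹ : (Matrix (Fin n) (Fin n) K)ˣ) : Matrix (Fin n) (Fin n) K) := by
            rw [hUV, smul_mul_assoc, one_mul]
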